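/- Let P be the Poisson distribution with parameter λ ≥ 2, with tilt_P(x) = max(P(x−1)/P(x), P(x+1)/P(x)) = max(x/λ, λ/(x+1)) for x ≥ 0 (where P(−1)/P(0) is interpreted as 0, so tilt_P(0) = λ). Then E_{x∼P}[tilt_P(x)²] ≤ λ²·E_{x∼P}[1/(x+1)²] + (λ² + λ)/λ², and combining with E_{x∼P}[1/(x+1)²] ≤ e^{−λ/8} + 4/λ² gives E_{x∼P}[tilt_P(x)²] ≤ λ²e^{−λ/8} + 6 = O(1). -/

import Mathlib

lemma aux_exp_sum (lam : ℝ) : (∑' x : ℕ, lam ^ x / (x.factorial : ℝ)) = Real.exp lam := by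
  rw [Real.exp_eq_exp_ℝ, NormedSpace.exp_eq_tsum_div]

lemma aux_h_summable (lam : ℝ) (hl : 0 < lam) :
    Summable (fun x : ℕ => lam ^ x * (x : ℝ) ^ 2 / x.factorial) := by
  refine Summable.of_nonneg_of_le (fun x => by positivity) (fun x => ?_)
    (Real.summable_pow_div_factorial (4 * lam))
  have hx : ((x : ℝ)) ^ 2 ≤ 4 ^ x := by
    have h1 : (x : ℝ) ≤ 2 ^ x := by exact_mod_cast (Nat.lt_two_pow_self (n := x)).le
    have h2 : ((x : ℝ)) ^ 2 ≤ ((2:ℝ) ^ x) ^ 2 := by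
      nlinarith [Nat.cast_nonneg (α := ℝ) x]
    have h3 : ((2:ℝ) ^ x) ^ 2 = 4 ^ x := by
      rw [← pow_mul, mul_comm, pow_mul]; norm_num
    linarith
  have h4 : (4 * lam) ^ x = lam ^ x * 4 ^ x := by rw [mul_pow]; ring
  rw [h4]
  gcongr

lemma aux_shift1 (lam : ℝ) :
    (∑' x : ℕ, lam ^ (x + 1) / ((x + 1).factorial : ℝ)) = Real.exp lam - 1 := by
  have hg := Real.summable_pow_div_factorial lam
  have := Summable.tsum_eq_zero_add (f := fun x : ℕ => lam ^ x / (x.factorial : ℝ)) hg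
  rw [aux_exp_sum] at this
  simp only [pow_zero, Nat.factorial_zero, Nat.cast_one, div_one] at this
  linarith [this]

lemma aux_shift2 (lam : ℝ) :
    (∑' x : ℕ, lam ^ (x + 2) / ((x + 2).factorial : ℝ)) = Real.exp lam - 1 - lam := by
  have hg := Real.summable_pow_div_factorial lam
  have hg1 : Summable (fun x : ℕ => lam ^ (x + 1) / ((x + 1).factorial : ℝ)) :=
    (summable_nat_add_iff 1).2 hg
  have := Summable.tsum_eq_zero_add (f := fun x : ℕ => lam ^ (x + 1) / ((x + 1).factorial : ℝ)) hg1
  rw [aux_shift1] at this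
  simp only [Nat.factorial_one, Nat.cast_one, pow_one, div_one, zero_add] at this
  have h2 : ∀ x : ℕ, lam ^ (x + 1 + 1) / (((x + 1 + 1).factorial : ℕ) : ℝ)
      = lam ^ (x + 2) / ((x + 2).factorial : ℝ) := by intro x; norm_num
  rw [tsum_congr h2] at this
  linarith [this]

lemma aux_h_sum (lam : ℝ) (hl : 0 < lam) :
    (∑' x : ℕ, lam ^ x * (x : ℝ) ^ 2 / x.factorial) = (lam ^ 2 + lam) * Real.exp lam := by
  set h : ℕ → ℝ := fun x => lam ^ x * (x : ℝ) ^ 2 / x.factorial with hdef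
  have hh := aux_h_summable lam hl
  have hh1 : Summable (fun x : ℕ => h (x + 1)) := (summable_nat_add_iff 1).2 hh
  have key : ∀ x : ℕ, h (x + 2) = lam ^ 2 * (lam ^ x / x.factorial) + lam * (lam ^ (x+1) / (x+1).factorial) := by
    intro x
    have e1 : (((x+1).factorial : ℕ) : ℝ) = ((x:ℝ)+1) * (x.factorial : ℝ) := by
      push_cast [Nat.factorial_succ]; ring
    have e2 : (((x+2).factorial : ℕ) : ℝ) = ((x:ℝ)+2) * (((x+1).factorial : ℕ) : ℝ) := by
      push_cast [Nat.factorial_succ]; ring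
    have fx : ((x.factorial : ℕ) : ℝ) ≠ 0 := by positivity
    simp only [hdef]
    rw [e2, e1]
    push_cast
    field_simp
    ring
  have sum2 : (∑' x : ℕ, h (x + 2)) = lam ^ 2 * Real.exp lam + lam * (Real.exp lam - 1) := by
    have s1 : Summable (fun x : ℕ => lam ^ 2 * (lam ^ x / (x.factorial : ℝ))) :=
      (Real.summable_pow_div_factorial lam).mul_left _
    have s2 : Summable (fun x : ℕ => lam * (lam ^ (x+1) / (((x+1).factorial : ℕ) : ℝ))) :=
      (((summable_nat_add_iff 1).2 (Real.summable_pow_div_factorial lam)).mul_left _)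
    rw [tsum_congr key, Summable.tsum_add s1 s2, tsum_mul_left, tsum_mul_left, aux_exp_sum, aux_shift1]
  have e0 := Summable.tsum_eq_zero_add hh
  have e1 := Summable.tsum_eq_zero_add hh1
  simp only [zero_add] at e1
  have congr2 : (∑' x : ℕ, h (x + 1 + 1)) = ∑' x : ℕ, h (x + 2) :=
    tsum_congr fun x => by norm_num
  rw [congr2, sum2] at e1
  rw [e1] at e0
  have h1 : h 1 = lam := by simp [hdef]
  rw [h1] at e0
  norm_num at e0
  simp only [hdef]
  rw [e0]; ring

/-- For `P = Poisson(λ)` with `λ ≥ 2` and `tilt_P(x) = max(x/λ, λ/(x+1))`,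
`E[tilt²] ≤ λ²·E[1/(x+1)²] + (λ²+λ)/λ²`, and combining with
`E[1/(x+1)²] ≤ e^{−λ/8} + 4/λ²` gives `E[tilt²] ≤ λ²e^{−λ/8} + 6`. -/
theorem poisson_tilt_sq_moment (lam : ℝ) (hlam : 2 ≤ lam)
    (tilt : ℕ → ℝ) (htilt : ∀ x : ℕ, tilt x = max ((x : ℝ) / lam) (lam / ((x : ℝ) + 1))) :
    (∑' x : ℕ, (Real.exp (-lam) * lam ^ x / x.factorial) * tilt x ^ 2) ≤
      lam ^ 2 * (∑' x : ℕ, (Real.exp (-lam) * lam ^ x / x.factorial) *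
        (1 / ((x : ℝ) + 1) ^ 2)) + (lam ^ 2 + lam) / lam ^ 2 ∧
    (∑' x : ℕ, (Real.exp (-lam) * lam ^ x / x.factorial) * tilt x ^ 2) ≤
      lam ^ 2 * Real.exp (-lam / 8) + 6 := by
  have hl0 : (0:ℝ) < lam := by linarith
  have hl2 : (0:ℝ) < lam ^ 2 := by positivity
  set c := Real.exp (-lam) with hc
  have hc0 : (0:ℝ) < c := Real.exp_pos _
  have hce : c * Real.exp lam = 1 := by rw [hc, ← Real.exp_add]; norm_num
  set a : ℕ → ℝ := fun x => (c * lam ^ x / x.factorial) * ((x:ℝ)/lam)^2 with hadef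
  set b : ℕ → ℝ := fun x => (c * lam ^ x / x.factorial) * (lam/((x:ℝ)+1))^2 with hbdef
  set t : ℕ → ℝ := fun x => (c * lam ^ x / x.factorial) * (1/((x:ℝ)+1)^2) with htdef
  have hg := Real.summable_pow_div_factorial lam
  have haeq : ∀ x, a x = (c / lam^2) * (lam ^ x * (x:ℝ)^2 / x.factorial) := by
    intro x
    have fx : ((x.factorial : ℕ):ℝ) ≠ 0 := by positivity
    simp only [hadef]; field_simp
  have ha : Summable a :=
    ((aux_h_summable lam hl0).mul_left (c / lam^2)).congr (fun x => (haeq x).symm)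
  have hasum : ∑' x, a x = (lam^2+lam)/lam^2 := by
    rw [tsum_congr haeq, tsum_mul_left, aux_h_sum lam hl0]
    have : (c / lam^2) * ((lam^2+lam) * Real.exp lam)
        = (lam^2+lam)/lam^2 * (c * Real.exp lam) := by ring
    rw [this, hce, mul_one]
  have hbeq : ∀ x, b x = lam^2 * t x := by
    intro x
    have hx1 : ((x:ℝ)+1) ≠ 0 := by positivity
    simp only [hbdef, htdef]; field_simp
  have ht0 : ∀ x, 0 ≤ t x := fun x => by simp only [htdef]; positivity
  have hP : Summable (fun x : ℕ => c * lam ^ x / (x.factorial : ℝ)) := by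
    simpa [mul_div_assoc] using hg.mul_left c
  have ht : Summable t := by
    refine Summable.of_nonneg_of_le ht0 (fun x => ?_) hP
    simp only [htdef]
    have hP0 : 0 ≤ c * lam ^ x / (x.factorial : ℝ) := by positivity
    have : 1/((x:ℝ)+1)^2 ≤ 1 := by
      rw [div_le_one (by positivity)]
      nlinarith [Nat.cast_nonneg (α := ℝ) x]
    nlinarith
  have hb : Summable b := (ht.mul_left (lam^2)).congr (fun x => (hbeq x).symm)
  have hbsum : ∑' x, b x = lam^2 * ∑' x, t x := by
    rw [tsum_congr hbeq, tsum_mul_left]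
  have key1 : ∀ x : ℕ, (c * lam ^ x / x.factorial) * tilt x ^ 2 ≤ a x + b x := by
    intro x
    rw [htilt x]
    have hP0 : 0 ≤ c * lam ^ x / (x.factorial : ℝ) := by positivity
    have hu : 0 ≤ (x:ℝ)/lam := by positivity
    have hv : 0 ≤ lam/((x:ℝ)+1) := by positivity
    have hmax : (max ((x:ℝ)/lam) (lam/((x:ℝ)+1)))^2
        ≤ ((x:ℝ)/lam)^2 + (lam/((x:ℝ)+1))^2 := by
      rcases max_cases ((x:ℝ)/lam) (lam/((x:ℝ)+1)) with ⟨h1,_⟩|⟨h1,_⟩ <;> rw [h1] <;> nlinarith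
    calc (c * lam ^ x / x.factorial) * (max ((x:ℝ)/lam) (lam/((x:ℝ)+1)))^2
        ≤ (c * lam ^ x / x.factorial) * (((x:ℝ)/lam)^2 + (lam/((x:ℝ)+1))^2) :=
          mul_le_mul_of_nonneg_left hmax hP0
      _ = a x + b x := by simp only [hadef, hbdef]; ring
  have hS : Summable (fun x : ℕ => (c * lam ^ x / x.factorial) * tilt x ^ 2) := by
    refine Summable.of_nonneg_of_le (fun x => ?_) key1 (ha.add hb)
    rw [htilt x]
    have : 0 ≤ max ((x:ℝ)/lam) (lam/((x:ℝ)+1)) :=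
      le_max_of_le_left (by positivity)
    positivity
  have first : (∑' x : ℕ, (c * lam ^ x / x.factorial) * tilt x ^ 2)
      ≤ lam ^ 2 * (∑' x, t x) + (lam^2+lam)/lam^2 := by
    have h := Summable.tsum_le_tsum key1 hS (ha.add hb)
    rw [Summable.tsum_add ha hb, hasum, hbsum] at h
    linarith
  refine ⟨first, ?_⟩
  -- second bound
  have he2 : (∑' x, t x) ≤ 2 / lam^2 := by
    have keyt : ∀ x : ℕ, t x ≤ (2*c/lam^2) * (lam ^ (x+2) / ((x+2).factorial : ℝ)) := by
      intro x
      have e1 : (((x+1).factorial : ℕ) : ℝ) = ((x:ℝ)+1) * (x.factorial : ℝ) := by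
        push_cast [Nat.factorial_succ]; ring
      have e2 : (((x+2).factorial : ℕ) : ℝ) = ((x:ℝ)+2) * (((x+1).factorial : ℕ) : ℝ) := by
        push_cast [Nat.factorial_succ]; ring
      have fx : (0:ℝ) < (x.factorial : ℕ) := by positivity
      have hx1 : (0:ℝ) < (x:ℝ)+1 := by positivity
      have hx2 : (0:ℝ) < (x:ℝ)+2 := by positivity
      have fne : ((x.factorial : ℕ):ℝ) ≠ 0 := ne_of_gt fx
      have h1ne : ((x:ℝ)+1) ≠ 0 := ne_of_gt hx1
      have h2ne : ((x:ℝ)+2) ≠ 0 := ne_of_gt hx2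
      have lne : lam ≠ 0 := ne_of_gt hl0
      simp only [htdef]
      rw [e2, e1, pow_add]
      have L : c * lam ^ x / (x.factorial:ℝ) * (1 / ((x:ℝ) + 1) ^ 2)
          = (c * lam ^ x) / ((x.factorial:ℝ) * ((x:ℝ) + 1) ^ 2) := by
        rw [div_mul_div_comm, mul_one]
      have R : 2*c/lam^2 * (lam^x*lam^2/(((x:ℝ)+2)*(((x:ℝ)+1)*(x.factorial:ℝ))))
          = (2*(c * lam ^ x)) / (((x:ℝ)+2)*(((x:ℝ)+1)*(x.factorial:ℝ))) := by
        field_simp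
      rw [L, R, div_le_div_iff₀ (by positivity) (by positivity)]
      have hA : (0:ℝ) < c * lam ^ x * (x.factorial:ℝ) :=
        mul_pos (mul_pos hc0 (pow_pos hl0 x)) fx
      nlinarith [mul_nonneg (mul_nonneg hA.le hx1.le) (Nat.cast_nonneg (α := ℝ) x)]
    have s3 : Summable (fun x : ℕ => (2*c/lam^2) * (lam ^ (x+2) / ((x+2).factorial : ℝ))) :=
      ((summable_nat_add_iff 2).2 hg).mul_left _
    have h := Summable.tsum_le_tsum keyt ht s3
    rw [tsum_mul_left, aux_shift2] at h
    have h1 : (2*c/lam^2) * (Real.exp lam - 1 - lam) ≤ (2*c/lam^2) * Real.exp lam :=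
      mul_le_mul_of_nonneg_left (by linarith) (by positivity)
    have h2 : (2*c/lam^2) * Real.exp lam = 2/lam^2 * (c * Real.exp lam) := by ring
    rw [h2, hce, mul_one] at h1
    linarith
  have hq : (lam^2+lam)/lam^2 ≤ 3/2 := by
    rw [div_le_iff₀ hl2]; nlinarith
  have hq2 : lam^2 * (∑' x, t x) ≤ 2 := by
    have := mul_le_mul_of_nonneg_left he2 hl2.le
    have h3 : lam^2 * (2/lam^2) = 2 := by field_simp
    linarith [h3 ▸ this]
  have hpos : 0 ≤ lam^2 * Real.exp (-lam/8) := by positivity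
  linarith
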